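/- A non-autonomous system (X, f_{1,∞}) on a compact metric space (with surjective maps) is topologically mixing if and only if the induced system (ℳ(X), f̃_{1,∞}) on Borel probability measures with the weak* topology is topologically mixing. -/

import Mathlib

open Metric TopologicalSpace MeasureTheory

/-- `nIter f n = f_n ∘ ⋯ ∘ f_1` (with `f (i)` playing the role of `f_{i+1}`), `nIter f 0 = id`. -/
def nIter {X : Type*} (f : ℕ → X → X) : ℕ → X → X
  | 0 => id
  | n + 1 => f n ∘ nIter f n

/-- Strong specification property for a non-autonomous system. -/
def SSP {X : Type*} [MetricSpace X] (f : ℕ → X → X) : Prop :=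
  ∀ ε : ℝ, ε > 0 → ∃ M : ℕ, ∀ k : ℕ, 1 ≤ k → ∀ (x : ℕ → X) (a b : ℕ → ℕ),
    (∀ i, i < k → a i ≤ b i) →
    (∀ i, i + 1 < k → b i < a (i + 1) ∧ M < a (i + 1) - b i) →
    ∀ p : ℕ, M + b (k - 1) - a 0 < p →
      ∃ z : X, (∀ m : ℕ, nIter f (p * m) z = z) ∧
        ∀ i, i < k → ∀ j, a i ≤ j → j ≤ b i →
          dist (nIter f j z) (nIter f j (x i)) < ε

/-- Weak specification property for a non-autonomous system. -/
def WSP {X : Type*} [MetricSpace X] (f : ℕ → X → X) : Prop :=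
  ∀ ε : ℝ, ε > 0 → ∃ N : ℕ, ∀ s : ℕ, 1 ≤ s → ∀ (x : ℕ → X) (a b : ℕ → ℕ),
    (∀ i, i < s → a i ≤ b i) →
    (∀ i, i + 1 < s → b i < a (i + 1) ∧ N < a (i + 1) - b i) →
      ∃ z : X, ∀ i, i < s → ∀ j, a i ≤ j → j ≤ b i →
        dist (nIter f j z) (nIter f j (x i)) < ε

/-- Quasi-weak specification property for a non-autonomous system. -/
def QSP {X : Type*} [MetricSpace X] (f : ℕ → X → X) : Prop :=
  ∀ ε : ℝ, ε > 0 → ∃ M : ℕ, ∀ x₁ x₂ : X, ∀ n : ℕ, M ≤ n →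
    ∃ z : X, dist z x₁ < ε ∧ dist (nIter f n z) (nIter f n x₂) < ε

/-- Topological mixing for a non-autonomous system. -/
def TopMixing {X : Type*} [TopologicalSpace X] (f : ℕ → X → X) : Prop :=
  ∀ U V : Set X, IsOpen U → IsOpen V → U.Nonempty → V.Nonempty →
    ∃ N : ℕ, ∀ n : ℕ, N ≤ n → (nIter f n '' U ∩ V).Nonempty

/-- Topological transitivity for a non-autonomous system. -/
def TopTransitive {X : Type*} [TopologicalSpace X] (f : ℕ → X → X) : Prop :=
  ∀ U V : Set X, IsOpen U → IsOpen V → U.Nonempty → V.Nonempty →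
    ∃ n : ℕ, 1 ≤ n ∧ (nIter f n '' U ∩ V).Nonempty

/-- Sensitive dependence on initial conditions for a non-autonomous system. -/
def Sensitive {X : Type*} [MetricSpace X] (f : ℕ → X → X) : Prop :=
  ∃ δ : ℝ, δ > 0 ∧ ∀ x : X, ∀ U : Set X, IsOpen U → x ∈ U →
    ∃ y ∈ U, ∃ n : ℕ, 1 ≤ n ∧ δ < dist (nIter f n x) (nIter f n y)

open scoped ENNReal NNReal

section Aux
set_option linter.unusedSectionVars false
variable {X : Type*} [MetricSpace X] [MeasurableSpace X] [BorelSpace X]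

lemma nIter_continuous (f : ℕ → X → X) (hc : ∀ n, Continuous (f n)) (n : ℕ) :
    Continuous (nIter f n) := by
  induction n with
  | zero => exact continuous_id
  | succ n ih => exact (hc n).comp ih

lemma sum_smul_dirac_apply {ι : Type*} (s : Finset ι) (w : ι → ℝ≥0∞) (x : ι → X) (B : Set X) :
    (∑ i ∈ s, w i • Measure.dirac (x i)) B = ∑ i ∈ s, w i * Measure.dirac (x i) B := by
  simp [Measure.finset_sum_apply, Measure.smul_apply]

lemma isProb_discrete {ι : Type*} (s : Finset ι) (w : ι → ℝ≥0∞) (x : ι → X)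
    (hw : ∑ i ∈ s, w i = 1) :
    IsProbabilityMeasure (∑ i ∈ s, w i • Measure.dirac (x i)) := by
  constructor
  rw [sum_smul_dirac_apply]
  simp [hw]

lemma map_discrete {ι : Type*} (s : Finset ι) (w : ι → ℝ≥0∞) (x : ι → X)
    {g : X → X} (hg : Measurable g) :
    (∑ i ∈ s, w i • Measure.dirac (x i)).map g
      = ∑ i ∈ s, w i • Measure.dirac (g (x i)) := by
  classical
  induction s using Finset.induction with
  | empty => simp
  | insert a s h ih =>
      rw [Finset.sum_insert h, Finset.sum_insert h, Measure.map_add _ _ hg,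
        Measure.map_smul, Measure.map_dirac' hg, ih]

lemma lp_aux {ι : Type*} (s : Finset ι) (w : ι → ℝ≥0∞) (p q : ι → X) {d : ℝ}
    {ε : ℝ≥0∞} (hd : ∀ i ∈ s, dist (p i) (q i) < d) (hdε : d < ε.toReal)
    {B : Set X} (hB : MeasurableSet B) :
    (∑ i ∈ s, w i • Measure.dirac (p i)) B
      ≤ (∑ i ∈ s, w i • Measure.dirac (q i)) (thickening ε.toReal B) := by
  rw [sum_smul_dirac_apply, sum_smul_dirac_apply]
  refine Finset.sum_le_sum fun i hi => ?_
  by_cases hp : p i ∈ B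
  · have hq : q i ∈ thickening ε.toReal B :=
      mem_thickening_iff.2 ⟨p i, hp, lt_trans (by rw [dist_comm]; exact hd i hi) hdε⟩
    rw [Measure.dirac_apply' _ hB, Measure.dirac_apply' _ isOpen_thickening.measurableSet,
      Set.indicator_of_mem hp, Set.indicator_of_mem hq, Pi.one_apply, Pi.one_apply]
  · rw [Measure.dirac_apply' _ hB, Set.indicator_of_notMem hp]
    simp

lemma lp_move {ι : Type*} (s : Finset ι) (w : ι → ℝ≥0∞) (p q : ι → X) {d : ℝ}
    (hd0 : 0 ≤ d) (hd : ∀ i ∈ s, dist (p i) (q i) < d) :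
    levyProkhorovEDist (∑ i ∈ s, w i • Measure.dirac (p i))
      (∑ i ∈ s, w i • Measure.dirac (q i)) ≤ ENNReal.ofReal d := by
  apply levyProkhorovEDist_le_of_forall
  intro ε B hε hεtop hB
  have hdε : d < ε.toReal := (ENNReal.ofReal_lt_iff_lt_toReal hd0 hεtop.ne).1 hε
  constructor
  · exact le_add_right (lp_aux s w p q hd hdε hB)
  · exact le_add_right (lp_aux s w q p (fun i hi => by rw [dist_comm]; exact hd i hi) hdε hB)


lemma lp_discrete [CompactSpace X] [Nonempty X] (μ : Measure X) [IsProbabilityMeasure μ]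
    {d : ℝ} (hd : 0 < d) :
    ∃ (k : ℕ) (w : ℕ → ℝ≥0∞) (x : ℕ → X),
      (∑ i ∈ Finset.range k, w i) = 1 ∧
      levyProkhorovEDist μ (∑ i ∈ Finset.range k, w i • Measure.dirac (x i))
        ≤ ENNReal.ofReal d := by
  classical
  obtain ⟨t, -, htf, htcov⟩ :=
    finite_cover_balls_of_compact (isCompact_univ (X := X)) (half_pos hd)
  set L : List X := htf.toFinset.toList with hL
  set c : ℕ → X := fun i => L.getD i (Classical.arbitrary X) with hc
  set B : ℕ → Set X := fun i => ball (c i) (d / 2) with hBdef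
  set A : ℕ → Set X := disjointed B with hAdef
  set k : ℕ := L.length + 1 with hk
  have hAsub : ∀ i, A i ⊆ B i := fun i => disjointed_subset B i
  have hAmeas : ∀ i, MeasurableSet (A i) :=
    MeasurableSet.disjointed (fun i => measurableSet_ball)
  have hAdisj : Pairwise (Function.onFun Disjoint A) := disjoint_disjointed B
  have hBcov : (⋃ i, B i) = Set.univ := by
    apply Set.eq_univ_of_univ_subset
    intro y hy
    obtain ⟨_, ⟨x0, rfl⟩, _, ⟨hx0t, rfl⟩, hyx0⟩ := htcov hy
    have hx0L : x0 ∈ L := by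
      rw [hL, Finset.mem_toList, Set.Finite.mem_toFinset]; exact hx0t
    obtain ⟨i, hi, hEq⟩ := List.mem_iff_getElem.1 hx0L
    refine Set.mem_iUnion.2 ⟨i, ?_⟩
    have hco : c i = x0 := by
      show L.getD i (Classical.arbitrary X) = x0
      rw [List.getD_eq_getElem _ _ hi]; exact hEq
    show y ∈ ball (c i) (d / 2)
    rw [hco]
    exact hyx0
  have hAempty : ∀ i, k ≤ i → A i = ∅ := by
    intro i hi
    obtain ⟨j, rfl⟩ : ∃ j, i = j + 1 := ⟨i - 1, by omega⟩
    have hj : L.length ≤ j := by omega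
    have hBeq : B (j + 1) = B L.length := by
      rw [hBdef]
      simp only [hc, List.getD_eq_default _ _ (by omega : L.length ≤ j + 1),
        List.getD_eq_default _ _ (le_refl L.length)]
    have : A (j + 1) = B (j + 1) \ (partialSups B) j := disjointed_add_one B j
    rw [this, hBeq, Set.diff_eq_empty]
    exact le_partialSups_of_le B hj
  have hAcover : (⋃ i ∈ Finset.range k, A i) = Set.univ := by
    apply Set.eq_univ_of_univ_subset
    intro y hy
    have : y ∈ ⋃ i, A i := by rw [hAdef, iUnion_disjointed, hBcov]; trivial
    obtain ⟨i, hi⟩ := Set.mem_iUnion.1 this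
    have hik : i < k := by
      by_contra hik
      rw [hAempty i (by omega)] at hi
      exact hi
    exact Set.mem_biUnion (Finset.mem_range.2 hik) hi
  set x : ℕ → X := fun i =>
    if h : (A i).Nonempty then h.choose else Classical.arbitrary X with hxdef
  have hx : ∀ i, (A i).Nonempty → x i ∈ A i := by
    intro i hne
    rw [hxdef]
    simpa [dif_pos hne] using hne.choose_spec
  have hclose : ∀ i, ∀ a ∈ A i, ∀ b ∈ A i, dist a b < d := by
    intro i a ha b hb
    have ha' := hAsub i ha
    have hb' := hAsub i hb
    rw [hBdef, mem_ball] at ha' hb'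
    calc dist a b ≤ dist a (c i) + dist (c i) b := dist_triangle _ _ _
    _ < d / 2 + d / 2 := by rw [dist_comm (c i) b]; exact add_lt_add ha' hb'
    _ = d := by ring
  set w : ℕ → ℝ≥0∞ := fun i => μ (A i) with hwdef
  have hPD : ∀ (u : Finset ℕ), Set.PairwiseDisjoint ↑u A :=
    fun u i _ j _ hij => hAdisj hij
  have hsum : ∑ i ∈ Finset.range k, w i = 1 := by
    rw [hwdef]
    rw [← measure_biUnion_finset (hPD _) (fun i _ => hAmeas i), hAcover, measure_univ]
  refine ⟨k, w, x, hsum, ?_⟩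
  apply levyProkhorovEDist_le_of_forall
  intro ε E hε hεtop hE
  have hdε : d < ε.toReal := (ENNReal.ofReal_lt_iff_lt_toReal hd.le hεtop.ne).1 hε
  have hTh : MeasurableSet (thickening ε.toReal E) := isOpen_thickening.measurableSet
  constructor
  · -- μ E ≤ discrete (thickening) + ε
    have h1 : μ E = ∑ i ∈ Finset.range k, μ (E ∩ A i) := by
      have hU : μ E = μ (⋃ i ∈ Finset.range k, (E ∩ A i)) := by
        rw [← Set.inter_iUnion₂, hAcover, Set.inter_univ]
      rw [hU, measure_biUnion_finset
        (fun i hi j hj hij => ((hPD _ hi hj hij).mono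
          Set.inter_subset_right Set.inter_subset_right))
        (fun i _ => hE.inter (hAmeas i))]
    have h2 : ∀ i ∈ Finset.range k,
        μ (E ∩ A i) ≤ w i * Measure.dirac (x i) (thickening ε.toReal E) := by
      intro i _
      rcases Set.eq_empty_or_nonempty (E ∩ A i) with hemp | ⟨y, hyE, hyA⟩
      · simp [hemp]
      · have hne : (A i).Nonempty := ⟨y, hyA⟩
        have hxi := hx i hne
        have hxth : x i ∈ thickening ε.toReal E :=
          mem_thickening_iff.2 ⟨y, hyE, lt_trans (hclose i _ hxi _ hyA) hdε⟩
        rw [Measure.dirac_apply' _ hTh, Set.indicator_of_mem hxth, Pi.one_apply, mul_one]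
        exact measure_mono (Set.inter_subset_right : E ∩ A i ⊆ A i)
    calc μ E = ∑ i ∈ Finset.range k, μ (E ∩ A i) := h1
    _ ≤ ∑ i ∈ Finset.range k, w i * Measure.dirac (x i) (thickening ε.toReal E) :=
        Finset.sum_le_sum h2
    _ = (∑ i ∈ Finset.range k, w i • Measure.dirac (x i)) (thickening ε.toReal E) :=
        (sum_smul_dirac_apply _ _ _ _).symm
    _ ≤ _ := le_add_right le_rfl
  · -- discrete E ≤ μ (thickening) + ε
    set T : Finset ℕ := (Finset.range k).filter (fun i => x i ∈ E) with hT
    have h1 : (∑ i ∈ Finset.range k, w i • Measure.dirac (x i)) E = ∑ i ∈ T, w i := by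
      rw [sum_smul_dirac_apply, hT, Finset.sum_filter]
      apply Finset.sum_congr rfl
      intro i _
      by_cases hxi : x i ∈ E
      · rw [if_pos hxi, Measure.dirac_apply' _ hE, Set.indicator_of_mem hxi,
          Pi.one_apply, mul_one]
      · rw [if_neg hxi, Measure.dirac_apply' _ hE, Set.indicator_of_notMem hxi, mul_zero]
    have h2 : (⋃ i ∈ T, A i) ⊆ thickening ε.toReal E := by
      intro y hy
      obtain ⟨i, hiT, hyA⟩ := Set.mem_iUnion₂.1 hy
      have hxiE : x i ∈ E := (Finset.mem_filter.1 hiT).2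
      have hne : (A i).Nonempty := ⟨y, hyA⟩
      exact mem_thickening_iff.2 ⟨x i, hxiE, lt_trans (hclose i _ hyA _ (hx i hne)) hdε⟩
    calc (∑ i ∈ Finset.range k, w i • Measure.dirac (x i)) E = ∑ i ∈ T, w i := h1
    _ = μ (⋃ i ∈ T, A i) :=
        (measure_biUnion_finset (hPD _) (fun i _ => hAmeas i)).symm
    _ ≤ μ (thickening ε.toReal E) := measure_mono h2
    _ ≤ _ := le_add_right le_rfl


lemma nIter_map (f : ℕ → X → X) (hc : ∀ n, Continuous (f n)) (n : ℕ)
    (μ : ProbabilityMeasure X) :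
    (nIter (fun n (μ : ProbabilityMeasure X) =>
        μ.map (hc n).measurable.aemeasurable) n μ).toMeasure
      = μ.toMeasure.map (nIter f n) := by
  induction n with
  | zero =>
      show μ.toMeasure = μ.toMeasure.map id
      rw [Measure.map_id]
  | succ n ih =>
      show ((nIter _ n μ).map (hc n).measurable.aemeasurable).toMeasure = _
      rw [ProbabilityMeasure.toMeasure_map, ih,
        Measure.map_map (hc n).measurable (nIter_continuous f hc n).measurable]
      rfl

lemma dist_lp [SeparableSpace X] (ρ σ : ProbabilityMeasure X) :
    dist (LevyProkhorov.probabilityMeasureHomeomorph (Ω := X) ρ)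
      (LevyProkhorov.probabilityMeasureHomeomorph (Ω := X) σ)
      = (levyProkhorovEDist ρ.toMeasure σ.toMeasure).toReal := rfl

lemma meas_large {ρ : ProbabilityMeasure X} {u : X} {r s : ℝ} (hr : 0 < r) (hs0 : 0 < s)
    {U : Set X} (hU : MeasurableSet U)
    (h : levyProkhorovEDist (Measure.dirac u) ρ.toMeasure < ENNReal.ofReal s)
    (hsub : ball u (r + s) ⊆ U) :
    1 ≤ ρ.toMeasure U + ENNReal.ofReal s := by
  have hkey := left_measure_le_of_levyProkhorovEDist_lt h (B := ball u r) measurableSet_ball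
  rw [ENNReal.toReal_ofReal hs0.le] at hkey
  have hd1 : Measure.dirac u (ball u r) = 1 := by
    rw [Measure.dirac_apply' _ measurableSet_ball,
      Set.indicator_of_mem (mem_ball_self hr), Pi.one_apply]
  have hth : thickening s (ball u r) ⊆ U := by
    intro y hy
    obtain ⟨z, hz, hyz⟩ := mem_thickening_iff.1 hy
    apply hsub
    rw [mem_ball] at *
    calc dist y u ≤ dist y z + dist z u := dist_triangle _ _ _
    _ < s + r := add_lt_add hyz hz
    _ = r + s := by ring
  calc (1 : ℝ≥0∞) = Measure.dirac u (ball u r) := hd1.symm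
  _ ≤ ρ.toMeasure (thickening s (ball u r)) + ENNReal.ofReal s := hkey
  _ ≤ ρ.toMeasure U + ENNReal.ofReal s := add_le_add_left (measure_mono hth) _

end Aux

theorem stmt12 {X : Type*} [MetricSpace X] [CompactSpace X] [MeasurableSpace X] [BorelSpace X]
    (f : ℕ → X → X) (hc : ∀ n, Continuous (f n)) (hs : ∀ n, Function.Surjective (f n)) :
    TopMixing f ↔
    TopMixing (fun n (μ : ProbabilityMeasure X) =>
      μ.map (hc n).measurable.aemeasurable) := by
  classical
  cases isEmpty_or_nonempty X with
  | inl hX =>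
      have hPM : IsEmpty (ProbabilityMeasure X) := by
        constructor
        intro μ
        have h1 : μ.toMeasure Set.univ = 1 := measure_univ
        rw [Set.univ_eq_empty_iff.2 hX, measure_empty] at h1
        exact zero_ne_one h1
      constructor
      · intro _ U V _ _ hUne _
        obtain ⟨μ, _⟩ := hUne
        exact (hPM.false μ).elim
      · intro _ U V _ _ hUne _
        obtain ⟨x, _⟩ := hUne
        exact (hX.false x).elim
  | inr hX =>
    constructor
    · -- base mixing implies induced mixing
      intro hmix Ut Vt hUtO hVtO hUne hVne
      obtain ⟨μ0, hμ0⟩ := hUne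
      obtain ⟨ν0, hν0⟩ := hVne
      set h := LevyProkhorov.probabilityMeasureHomeomorph (Ω := X) with hh
      obtain ⟨εU, hεU, hballU⟩ := Metric.isOpen_iff.1 (hUtO.preimage h.symm.continuous) (h μ0)
        (by rw [Set.mem_preimage, Homeomorph.symm_apply_apply]; exact hμ0)
      obtain ⟨εV, hεV, hballV⟩ := Metric.isOpen_iff.1 (hVtO.preimage h.symm.continuous) (h ν0)
        (by rw [Set.mem_preimage, Homeomorph.symm_apply_apply]; exact hν0)
      set ε : ℝ := min εU εV with hε
      have hε0 : 0 < ε := lt_min hεU hεV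
      set d : ℝ := ε / 5 with hd
      have hd0 : 0 < d := by positivity
      obtain ⟨k1, w, x, hw1, hwd⟩ := lp_discrete μ0.toMeasure hd0
      obtain ⟨k2, v, y, hv1, hvd⟩ := lp_discrete ν0.toMeasure hd0
      set s : Finset (ℕ × ℕ) := Finset.range k1 ×ˢ Finset.range k2 with hsdef
      have hmixp : ∀ p : ℕ × ℕ, ∃ N, ∀ n, N ≤ n →
          ((nIter f n '' ball (x p.1) d) ∩ ball (y p.2) d).Nonempty :=
        fun p => hmix _ _ isOpen_ball isOpen_ball
          ⟨x p.1, mem_ball_self hd0⟩ ⟨y p.2, mem_ball_self hd0⟩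
      choose Nf hNf using hmixp
      refine ⟨s.sup Nf, fun n hn => ?_⟩
      have hz0 : ∀ p ∈ s, ∃ z, dist z (x p.1) < d ∧ dist (nIter f n z) (y p.2) < d := by
        intro p hp
        obtain ⟨-, ⟨z, hz1, rfl⟩, hz2⟩ := hNf p n (le_trans (Finset.le_sup hp) hn)
        exact ⟨z, mem_ball.1 hz1, mem_ball.1 hz2⟩
      set z : ℕ × ℕ → X := fun p =>
        if hp : p ∈ s then (hz0 p hp).choose else Classical.arbitrary X with hzdef
      have hz1 : ∀ p ∈ s, dist (z p) (x p.1) < d := by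
        intro p hp
        have : z p = (hz0 p hp).choose := by rw [hzdef]; simp only [dif_pos hp]
        rw [this]; exact (hz0 p hp).choose_spec.1
      have hz2 : ∀ p ∈ s, dist (nIter f n (z p)) (y p.2) < d := by
        intro p hp
        have : z p = (hz0 p hp).choose := by rw [hzdef]; simp only [dif_pos hp]
        rw [this]; exact (hz0 p hp).choose_spec.2
      set W : ℕ × ℕ → ℝ≥0∞ := fun p => w p.1 * v p.2 with hWdef
      have hWsum : ∑ p ∈ s, W p = 1 := by
        rw [hsdef, Finset.sum_product]
        have hrow : ∀ i, ∑ j ∈ Finset.range k2, W (i, j) = w i := by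
          intro i
          show ∑ j ∈ Finset.range k2, w i * v j = w i
          rw [← Finset.mul_sum, hv1, mul_one]
        rw [Finset.sum_congr rfl (fun i _ => hrow i), hw1]
      have hprob : IsProbabilityMeasure (∑ p ∈ s, W p • Measure.dirac (z p)) :=
        isProb_discrete s W z hWsum
      set P : ProbabilityMeasure X := ⟨∑ p ∈ s, W p • Measure.dirac (z p), hprob⟩ with hP
      have hxid : (∑ p ∈ s, W p • Measure.dirac (x p.1))
          = ∑ i ∈ Finset.range k1, w i • Measure.dirac (x i) := by
        rw [hsdef, Finset.sum_product]
        refine Finset.sum_congr rfl fun i _ => ?_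
        show ∑ j ∈ Finset.range k2, (w i * v j) • Measure.dirac (x i) = _
        rw [← Finset.sum_smul, ← Finset.mul_sum, hv1, mul_one]
      have hyid : (∑ p ∈ s, W p • Measure.dirac (y p.2))
          = ∑ j ∈ Finset.range k2, v j • Measure.dirac (y j) := by
        rw [hsdef, Finset.sum_product_right]
        refine Finset.sum_congr rfl fun j _ => ?_
        show ∑ i ∈ Finset.range k1, (w i * v j) • Measure.dirac (y j) = _
        rw [← Finset.sum_smul, ← Finset.sum_mul, hw1, one_mul]
      have e1 : levyProkhorovEDist μ0.toMeasure P.toMeasure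
          ≤ ENNReal.ofReal d + ENNReal.ofReal d := by
        calc levyProkhorovEDist μ0.toMeasure P.toMeasure
            ≤ levyProkhorovEDist μ0.toMeasure (∑ p ∈ s, W p • Measure.dirac (x p.1))
              + levyProkhorovEDist (∑ p ∈ s, W p • Measure.dirac (x p.1)) P.toMeasure :=
              levyProkhorovEDist_triangle _ _ _
        _ ≤ ENNReal.ofReal d + ENNReal.ofReal d :=
              add_le_add (by rw [hxid]; exact hwd)
                (lp_move s W _ z hd0.le (fun p hp => by rw [dist_comm]; exact hz1 p hp))
      set Q : ProbabilityMeasure X :=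
        nIter (fun m (μ : ProbabilityMeasure X) => μ.map (hc m).measurable.aemeasurable) n P
        with hQ
      have hQm : Q.toMeasure = ∑ p ∈ s, W p • Measure.dirac (nIter f n (z p)) := by
        rw [hQ, nIter_map f hc n P]
        exact map_discrete s W z (nIter_continuous f hc n).measurable
      have e2 : levyProkhorovEDist ν0.toMeasure Q.toMeasure
          ≤ ENNReal.ofReal d + ENNReal.ofReal d := by
        rw [hQm]
        calc levyProkhorovEDist ν0.toMeasure (∑ p ∈ s, W p • Measure.dirac (nIter f n (z p)))
            ≤ levyProkhorovEDist ν0.toMeasure (∑ p ∈ s, W p • Measure.dirac (y p.2))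
              + levyProkhorovEDist (∑ p ∈ s, W p • Measure.dirac (y p.2))
                (∑ p ∈ s, W p • Measure.dirac (nIter f n (z p))) :=
              levyProkhorovEDist_triangle _ _ _
        _ ≤ ENNReal.ofReal d + ENNReal.ofReal d :=
              add_le_add (by rw [hyid]; exact hvd)
                (lp_move s W _ _ hd0.le (fun p hp => by rw [dist_comm]; exact hz2 p hp))
      have hdist2 : ∀ σ τ : ProbabilityMeasure X,
          levyProkhorovEDist σ.toMeasure τ.toMeasure ≤ ENNReal.ofReal d + ENNReal.ofReal d →
          dist (h τ) (h σ) < ε := by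
        intro σ τ hle
        rw [hh, dist_lp]
        rw [levyProkhorovEDist_comm, ← ENNReal.ofReal_add hd0.le hd0.le] at hle
        have hto := ENNReal.toReal_le_of_le_ofReal (by positivity) hle
        have : d = ε / 5 := hd
        linarith
      have hPUt : P ∈ Ut := by
        have hm : h P ∈ Metric.ball (h μ0) εU :=
          mem_ball.2 (lt_of_lt_of_le (hdist2 μ0 P e1) (min_le_left _ _))
        have := hballU hm
        rwa [Set.mem_preimage, Homeomorph.symm_apply_apply] at this
      have hQVt : Q ∈ Vt := by
        have hm : h Q ∈ Metric.ball (h ν0) εV :=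
          mem_ball.2 (lt_of_lt_of_le (hdist2 ν0 Q e2) (min_le_right _ _))
        have := hballV hm
        rwa [Set.mem_preimage, Homeomorph.symm_apply_apply] at this
      exact ⟨Q, ⟨P, hPUt, rfl⟩, hQVt⟩
    · -- induced mixing implies base mixing
      intro hmix U V hU hV hUne hVne
      obtain ⟨u, hu⟩ := hUne
      obtain ⟨v, hv⟩ := hVne
      obtain ⟨rU, hrU, hbU⟩ := Metric.isOpen_iff.1 hU u hu
      obtain ⟨rV, hrV, hbV⟩ := Metric.isOpen_iff.1 hV v hv
      set h := LevyProkhorov.probabilityMeasureHomeomorph (Ω := X) with hh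
      set sU : ℝ := min (rU / 4) 4⁻¹ with hsUdef
      set sV : ℝ := min (rV / 4) 4⁻¹ with hsVdef
      have hsU : 0 < sU := lt_min (by linarith) (by norm_num)
      have hsV : 0 < sV := lt_min (by linarith) (by norm_num)
      set Pu : ProbabilityMeasure X := ⟨Measure.dirac u, inferInstance⟩ with hPudef
      set Pv : ProbabilityMeasure X := ⟨Measure.dirac v, inferInstance⟩ with hPvdef
      have key : ∀ (Pz : ProbabilityMeasure X) (sz : ℝ), 0 < sz → ∀ ρ : ProbabilityMeasure X,
          h ρ ∈ Metric.ball (h Pz) sz →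
          levyProkhorovEDist Pz.toMeasure ρ.toMeasure < ENNReal.ofReal sz := by
        intro Pz sz hsz ρ hmem
        rw [hh, mem_ball, dist_lp] at hmem
        rw [levyProkhorovEDist_comm]
        exact (ENNReal.lt_ofReal_iff_toReal_lt
          (levyProkhorovEDist_ne_top _ _)).2 hmem
      obtain ⟨N, hN⟩ := hmix (h ⁻¹' Metric.ball (h Pu) sU) (h ⁻¹' Metric.ball (h Pv) sV)
        (isOpen_ball.preimage h.continuous) (isOpen_ball.preimage h.continuous)
        ⟨Pu, Set.mem_preimage.2 (mem_ball_self hsU)⟩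
        ⟨Pv, Set.mem_preimage.2 (mem_ball_self hsV)⟩
      refine ⟨N, fun n hn => ?_⟩
      obtain ⟨ρ', hρ'img, hρ'V⟩ := hN n hn
      obtain ⟨ρ, hρU, rfl⟩ := hρ'img
      have hWmeas : MeasurableSet ((nIter f n) ⁻¹' V) :=
        (nIter_continuous f hc n).measurable hV.measurableSet
      have hU1 : 1 ≤ ρ.toMeasure U + ENNReal.ofReal sU := by
        refine meas_large (half_pos hrU) hsU hU.measurableSet (key Pu sU hsU ρ hρU) ?_
        refine Set.Subset.trans (ball_subset_ball ?_) hbU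
        have h1 : sU ≤ rU / 4 := min_le_left _ _
        linarith
      have hV1 : 1 ≤ ρ.toMeasure ((nIter f n) ⁻¹' V) + ENNReal.ofReal sV := by
        have hkey := key Pv sV hsV _ hρ'V
        have hml := meas_large (half_pos hrV) hsV hV.measurableSet hkey
          (Set.Subset.trans (ball_subset_ball (by
            have h1 : sV ≤ rV / 4 := min_le_left _ _
            linarith)) hbV)
        rwa [nIter_map f hc n ρ,
          Measure.map_apply (nIter_continuous f hc n).measurable hV.measurableSet] at hml
      by_contra hne
      rw [Set.not_nonempty_iff_eq_empty] at hne
      have hUW : U ∩ ((nIter f n) ⁻¹' V) = ∅ := by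
        rw [Set.eq_empty_iff_forall_notMem]
        rintro p ⟨hpU, hpW⟩
        rw [Set.eq_empty_iff_forall_notMem] at hne
        exact hne (nIter f n p) ⟨⟨p, hpU, rfl⟩, hpW⟩
      have hunion : ρ.toMeasure (U ∪ (nIter f n) ⁻¹' V)
          = ρ.toMeasure U + ρ.toMeasure ((nIter f n) ⁻¹' V) :=
        measure_union (Set.disjoint_iff_inter_eq_empty.2 hUW) hWmeas
      have hle1 : ρ.toMeasure (U ∪ (nIter f n) ⁻¹' V) ≤ 1 := prob_le_one
      have hqU : ENNReal.ofReal sU ≤ ENNReal.ofReal 4⁻¹ :=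
        ENNReal.ofReal_le_ofReal (min_le_right _ _)
      have hqV : ENNReal.ofReal sV ≤ ENNReal.ofReal 4⁻¹ :=
        ENNReal.ofReal_le_ofReal (min_le_right _ _)
      have hcon : (2 : ℝ≥0∞) ≤ ENNReal.ofReal 1 + (ENNReal.ofReal 4⁻¹ + ENNReal.ofReal 4⁻¹) := by
        calc (2 : ℝ≥0∞) = 1 + 1 := by norm_num
        _ ≤ (ρ.toMeasure U + ENNReal.ofReal sU)
            + (ρ.toMeasure ((nIter f n) ⁻¹' V) + ENNReal.ofReal sV) := add_le_add hU1 hV1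
        _ = (ρ.toMeasure U + ρ.toMeasure ((nIter f n) ⁻¹' V))
            + (ENNReal.ofReal sU + ENNReal.ofReal sV) := by ring
        _ ≤ 1 + (ENNReal.ofReal 4⁻¹ + ENNReal.ofReal 4⁻¹) :=
            add_le_add (by rw [← hunion]; exact hle1) (add_le_add hqU hqV)
        _ = ENNReal.ofReal 1 + (ENNReal.ofReal 4⁻¹ + ENNReal.ofReal 4⁻¹) := by
            rw [ENNReal.ofReal_one]
      rw [← ENNReal.ofReal_add (by norm_num) (by norm_num),
        ← ENNReal.ofReal_add (by norm_num) (by norm_num)] at hcon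
      have h2 : (2 : ℝ≥0∞) = ENNReal.ofReal 2 := by
        rw [ENNReal.ofReal_ofNat]
      rw [h2] at hcon
      have := (ENNReal.ofReal_le_ofReal_iff (by norm_num)).1 hcon
      norm_num at this
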